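/- arXiv:2010.11161 — 3 statements merged into one kernel-verified Lean document; each statement's English description precedes it below -/
import Mathlib

section
/- In SL(2,ℤ), the elements A·B and (A·B)⁵ are not conjugate: there is no P ∈ SL(2,ℤ) with P(A·B)P⁻¹ = (A·B)⁵. Hence the two order-6 elements A·B and (A·B)⁵ represent two distinct conjugacy classes of order-6 elements. -/
/-- The matrix `A = [[1,1],[0,1]]` as an element of `SL(2,ℤ)`. -/
def A : Matrix.SpecialLinearGroup (Fin 2) ℤ :=
  ⟨!![1, 1; 0, 1], by norm_num [Matrix.det_fin_two_of]⟩

/-- The matrix `B = [[1,0],[-1,1]]` as an element of `SL(2,ℤ)`. -/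
def B : Matrix.SpecialLinearGroup (Fin 2) ℤ :=
  ⟨!![1, 0; -1, 1], by norm_num [Matrix.det_fin_two_of]⟩

/-- In `SL(2,ℤ)`, the order-6 elements `A·B` and `(A·B)⁵` are not conjugate: there is no
`P ∈ SL(2,ℤ)` with `P(A·B)P⁻¹ = (A·B)⁵`. -/
theorem not_conj_A_mul_B_pow_five :
    ¬ ∃ P : Matrix.SpecialLinearGroup (Fin 2) ℤ, P * (A * B) * P⁻¹ = (A * B) ^ 5 := by
  rintro ⟨P, hP⟩
  have hg : P * (A * B) = (A * B) ^ 5 * P := by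
    have := congrArg (· * P) hP
    simpa [mul_assoc] using this
  have hm : (P : Matrix (Fin 2) (Fin 2) ℤ) * ((A * B : Matrix.SpecialLinearGroup (Fin 2) ℤ) : Matrix (Fin 2) (Fin 2) ℤ)
      = (((A * B) ^ 5 : Matrix.SpecialLinearGroup (Fin 2) ℤ) : Matrix (Fin 2) (Fin 2) ℤ) * P := by
    exact_mod_cast congrArg (Subtype.val) hg
  set a := (P : Matrix (Fin 2) (Fin 2) ℤ) 0 0 with ha
  set b := (P : Matrix (Fin 2) (Fin 2) ℤ) 0 1 with hb
  set c := (P : Matrix (Fin 2) (Fin 2) ℤ) 1 0 with hc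
  set d := (P : Matrix (Fin 2) (Fin 2) ℤ) 1 1 with hd
  have hdet : a * d - b * c = 1 := by
    have := P.property
    rwa [Matrix.det_fin_two] at this
  have hAB : ((A * B : Matrix.SpecialLinearGroup (Fin 2) ℤ) : Matrix (Fin 2) (Fin 2) ℤ)
      = !![0, 1; -1, 1] := by
    rw [Matrix.SpecialLinearGroup.coe_mul]
    simp [A, B, Matrix.mul_fin_two]
  have hAB5 : (((A * B) ^ 5 : Matrix.SpecialLinearGroup (Fin 2) ℤ) : Matrix (Fin 2) (Fin 2) ℤ)
      = !![1, -1; 1, 0] := by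
    rw [Matrix.SpecialLinearGroup.coe_pow, hAB]
    decide
  rw [hAB, hAB5] at hm
  have e00 := congrFun (congrFun hm 0) 0
  have e01 := congrFun (congrFun hm 0) 1
  have e10 := congrFun (congrFun hm 1) 0
  have e11 := congrFun (congrFun hm 1) 1
  simp [Matrix.mul_apply, Fin.sum_univ_two, ← ha, ← hb, ← hc, ← hd] at e00 e01 e10 e11
  have hd' : d = -a := by linarith
  have hc' : c = a + b := by linarith
  rw [hd', hc'] at hdet
  nlinarith [sq_nonneg (2*a + b), sq_nonneg b]
end

section
/- In SL(2,ℤ), the elements A²·B and (A²·B)³ are not conjugate: there is no P ∈ SL(2,ℤ) with P(A²·B)P⁻¹ = (A²·B)³. Hence the two order-4 elements A²·B and (A²·B)³ represent two distinct conjugacy classes of order-4 elements. -/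
/-- In `SL(2,ℤ)`, the order-4 elements `A²·B` and `(A²·B)³` are not conjugate: there is
no `P ∈ SL(2,ℤ)` with `P(A²·B)P⁻¹ = (A²·B)³`. -/
theorem not_conj_A_sq_mul_B_pow_three :
    ¬ ∃ P : Matrix.SpecialLinearGroup (Fin 2) ℤ,
      P * (A ^ 2 * B) * P⁻¹ = (A ^ 2 * B) ^ 3 := by
  rintro ⟨P, h⟩
  have h' : P * (A ^ 2 * B) = (A ^ 2 * B) ^ 3 * P := mul_inv_eq_iff_eq_mul.mp h
  have hM : ((P : Matrix (Fin 2) (Fin 2) ℤ) * (A ^ 2 * B : Matrix.SpecialLinearGroup (Fin 2) ℤ))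
      = ((A ^ 2 * B : Matrix.SpecialLinearGroup (Fin 2) ℤ) : Matrix (Fin 2) (Fin 2) ℤ) ^ 3
        * (P : Matrix (Fin 2) (Fin 2) ℤ) := by
    have := congrArg (Subtype.val) h'
    simpa using this
  set a := (P : Matrix (Fin 2) (Fin 2) ℤ) 0 0 with ha
  set b := (P : Matrix (Fin 2) (Fin 2) ℤ) 0 1 with hb
  set c := (P : Matrix (Fin 2) (Fin 2) ℤ) 1 0 with hc
  set d := (P : Matrix (Fin 2) (Fin 2) ℤ) 1 1 with hd
  have hdet : a * d - b * c = 1 := by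
    have := P.2
    rw [Matrix.det_fin_two] at this
    exact this
  have hMmat : ((A ^ 2 * B : Matrix.SpecialLinearGroup (Fin 2) ℤ) : Matrix (Fin 2) (Fin 2) ℤ)
      = !![-1, 2; -1, 1] := by
    rw [Matrix.SpecialLinearGroup.coe_mul, Matrix.SpecialLinearGroup.coe_pow]
    simp [A, B, pow_two]
  rw [hMmat] at hM
  have e00 := congrFun (congrFun hM 0) 0
  have e01 := congrFun (congrFun hM 0) 1
  have e10 := congrFun (congrFun hM 1) 0
  have e11 := congrFun (congrFun hM 1) 1
  simp [Matrix.mul_apply, Fin.sum_univ_two, pow_succ, pow_zero, ← ha, ← hb, ← hc, ← hd] at e00 e01 e10 e11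
  have hb' : b = 2 * c - 2 * a := by linarith
  have hd' : d = -a := by linarith
  have key : (a - c) ^ 2 + c ^ 2 = -1 := by linear_combination -hdet - c * hb' + a * hd'
  nlinarith [sq_nonneg (a - c), sq_nonneg c, key]
end

section
/- Every nontrivial finite-order element of SL(2,ℤ) is conjugate in SL(2,ℤ) to exactly one of the seven elements A·B, (A·B)², (A·B)³, (A·B)⁴, (A·B)⁵, A²·B, (A²·B)³. -/
section SL2Aux

abbrev SL2 := Matrix.SpecialLinearGroup (Fin 2) ℤ
def mk (a b c d : ℤ) (h : a*d - b*c = 1) : SL2 :=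
  ⟨!![a,b;c,d], by simpa [Matrix.det_fin_two_of] using h⟩
@[simp] lemma mk_coe (a b c d : ℤ) (h) : ((mk a b c d h : SL2) : Matrix (Fin 2) (Fin 2) ℤ) = !![a,b;c,d] := rfl

lemma isConj_of (p q r s : ℤ) (h : p*s - q*r = 1) (M N : SL2)
    (h2 : !![p,q;r,s] * (M : Matrix (Fin 2) (Fin 2) ℤ) = (N : Matrix (Fin 2) (Fin 2) ℤ) * !![p,q;r,s]) :
    IsConj M N := by
  refine isConj_iff.2 ⟨mk p q r s h, ?_⟩
  have h3 : (mk p q r s h) * M = N * (mk p q r s h) := Subtype.ext (by simpa using h2)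
  rw [h3, mul_inv_cancel_right]

def St (t : ℤ) : SL2 := mk 0 (-1) 1 t (by ring)
def St' (t : ℤ) : SL2 := mk 0 1 (-1) t (by ring)
@[simp] lemma St'_coe (t : ℤ) : ((St' t : SL2) : Matrix (Fin 2) (Fin 2) ℤ) = !![0,1;-1,t] := rfl
@[simp] lemma St_coe (t : ℤ) : ((St t : SL2) : Matrix (Fin 2) (Fin 2) ℤ) = !![0,-1;1,t] := rfl

lemma det_entries (M : SL2) :
    (M : Matrix (Fin 2) (Fin 2) ℤ) 0 0 * (M : Matrix (Fin 2) (Fin 2) ℤ) 1 1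
      - (M : Matrix (Fin 2) (Fin 2) ℤ) 0 1 * (M : Matrix (Fin 2) (Fin 2) ℤ) 1 0 = 1 := by
  have := M.2
  rwa [Matrix.det_fin_two] at this

lemma reduce_pos (t : ℤ) (ht : t^2 ≤ 1) :
    ∀ n : ℕ, ∀ M : SL2, (M : Matrix (Fin 2) (Fin 2) ℤ) 0 0 + (M : Matrix (Fin 2) (Fin 2) ℤ) 1 1 = t →
      (M : Matrix (Fin 2) (Fin 2) ℤ) 1 0 = (n : ℤ) + 1 → IsConj M (St t) := by
  intro n
  induction n using Nat.strong_induction_on with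
  | _ n IH =>
  intro M htr hc
  set a := (M : Matrix (Fin 2) (Fin 2) ℤ) 0 0 with ha
  set b := (M : Matrix (Fin 2) (Fin 2) ℤ) 0 1 with hb
  set c := (M : Matrix (Fin 2) (Fin 2) ℤ) 1 0 with hcc
  set d := (M : Matrix (Fin 2) (Fin 2) ℤ) 1 1 with hd
  have hMeta : (M : Matrix (Fin 2) (Fin 2) ℤ) = !![a,b;c,d] := by
    rw [ha, hb, hcc, hd]; exact Matrix.eta_fin_two _
  have hdet : a * d - b * c = 1 := det_entries M
  have hc0 : 0 < c := by rw [hc]; positivity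
  set k : ℤ := (a - d + c) / (2*c) with hk
  set j : ℤ := -k with hj
  have hdiv := Int.mul_ediv_add_emod (a - d + c) (2*c)
  have hr1 : 0 ≤ (a - d + c) % (2*c) := Int.emod_nonneg _ (by omega)
  have hr2 : (a - d + c) % (2*c) < 2*c := Int.emod_lt_of_pos _ (by omega)
  set a' : ℤ := a + j*c with ha'
  set b' : ℤ := b + j*(d-a) - j^2*c with hb'
  set d' : ℤ := d - j*c with hd'
  have hdet' : a' * d' - b' * c = 1 := by rw [ha', hb', hd']; linear_combination hdet
  have he : a' - d' = (a - d + c) % (2*c) - c := by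
    rw [ha', hd', hj]; linear_combination -hdiv - 2*c*hk
  have he'l : -c ≤ a' - d' := by rw [he]; linarith
  have he'r : a' - d' < c := by rw [he]; linarith
  have htr' : a' + d' = t := by rw [ha', hd']; linear_combination htr
  have hconj1 : IsConj M (mk a' b' c d' hdet') := by
    apply isConj_of 1 j 0 1 (by ring)
    rw [hMeta, mk_coe]
    ext i jj
    fin_cases i <;> fin_cases jj <;>
      simp [Matrix.mul_apply, Fin.sum_univ_two, ha', hb', hd'] <;> ring
  have hkey : 4*c*(-b') = (a'-d')^2 + 4 - t^2 := by
    linear_combination 4*hdet' - (t + a' + d') * htr'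
  have hf : 0 < -b' := by nlinarith [sq_nonneg (a'-d'), hc0, ht, hkey]
  by_cases hlt : -b' < c
  · -- conjugate by S and recurse
    have hdet'' : d' * a' - (-c) * (-b') = 1 := by linear_combination hdet'
    have hconj2 : IsConj (mk a' b' c d' hdet') (mk d' (-c) (-b') a' hdet'') := by
      apply isConj_of 0 (-1) 1 0 (by ring)
      rw [mk_coe, mk_coe]
      ext i jj
      fin_cases i <;> fin_cases jj <;>
        simp [Matrix.mul_apply, Fin.sum_univ_two] <;> ring
    obtain ⟨m, hmn, hmb⟩ : ∃ m : ℕ, m < n ∧ (-b') = (m : ℤ) + 1 :=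
      ⟨(-b').toNat - 1, by omega, by omega⟩
    have hrec := IH m hmn (mk d' (-c) (-b') a' hdet'')
      (by simpa using (by linarith : d' + a' = t)) (by simpa using hmb)
    exact hconj1.trans (hconj2.trans hrec)
  · -- c = 1, finish
    push_neg at hlt
    have hesq : (a'-d')^2 ≤ c^2 := by
      nlinarith [mul_nonneg (by linarith : (0:ℤ) ≤ a'-d'+c) (by linarith : (0:ℤ) ≤ c-(a'-d'))]
    have h4c : 4*c*c ≤ 4*c*(-b') := by
      have := mul_le_mul_of_nonneg_left hlt (by linarith : (0:ℤ) ≤ 4*c)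
      linarith
    have hcc2 : 4*c*c = 4*c^2 := by ring
    have hex : (c-1)^2 = c^2 - 2*c + 1 := by ring
    have h6 : 6*c ≤ 7 := by linarith [sq_nonneg (c-1), sq_nonneg t]
    have hc1 : c = 1 := by omega
    have hlast : IsConj (mk a' b' c d' hdet') (St t) := by
      apply isConj_of 1 (-a') 0 1 (by ring)
      rw [mk_coe, St_coe]
      ext i jj
      fin_cases i <;> fin_cases jj <;> simp [Matrix.mul_apply, Fin.sum_univ_two]
      · linear_combination (-a')*hc1
      · linear_combination -hdet' - b'*hc1
      · exact hc1
      · linear_combination htr'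
    exact hconj1.trans hlast

lemma isConj_inv {G : Type*} [Group G] {x y : G} (h : IsConj x y) : IsConj x⁻¹ y⁻¹ := by
  obtain ⟨g, hg⟩ := isConj_iff.1 h
  exact isConj_iff.2 ⟨g, by rw [← hg]; group⟩

-- test mk_inv : explicit inverse
lemma mk_inv (a b c d : ℤ) (h : a*d - b*c = 1) :
    (mk a b c d h)⁻¹ = mk d (-b) (-c) a (by linear_combination h) := by
  apply inv_eq_of_mul_eq_one_right
  apply Subtype.ext
  show (_ * _ : Matrix (Fin 2) (Fin 2) ℤ) = _
  rw [mk_coe, mk_coe, Matrix.SpecialLinearGroup.coe_one]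
  ext i j
  fin_cases i <;> fin_cases j <;>
    simp [Matrix.mul_apply, Fin.sum_univ_two] <;> linarith [h]

lemma reduce_neg (t : ℤ) (ht : t^2 ≤ 1) (M : SL2)
    (htr : (M : Matrix (Fin 2) (Fin 2) ℤ) 0 0 + (M : Matrix (Fin 2) (Fin 2) ℤ) 1 1 = t)
    (hc : (M : Matrix (Fin 2) (Fin 2) ℤ) 1 0 < 0) : IsConj M (St' t) := by
  set a := (M : Matrix (Fin 2) (Fin 2) ℤ) 0 0 with ha
  set b := (M : Matrix (Fin 2) (Fin 2) ℤ) 0 1 with hb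
  set c := (M : Matrix (Fin 2) (Fin 2) ℤ) 1 0 with hcc
  set d := (M : Matrix (Fin 2) (Fin 2) ℤ) 1 1 with hd
  have hMeta : (M : Matrix (Fin 2) (Fin 2) ℤ) = !![a,b;c,d] := by
    rw [ha, hb, hcc, hd]; exact Matrix.eta_fin_two _
  have hdet : a * d - b * c = 1 := det_entries M
  have hMmk : M = mk a b c d hdet := Subtype.ext (by rw [mk_coe]; exact hMeta)
  -- the inverse has positive c entry
  have hNdet : d * a - (-b) * (-c) = 1 := by linear_combination hdet
  have hMinv : M⁻¹ = mk d (-b) (-c) a hNdet := by rw [hMmk, mk_inv]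
  obtain ⟨n, hn⟩ : ∃ n : ℕ, -c = (n : ℤ) + 1 := ⟨(-c).toNat - 1, by omega⟩
  have h1 : IsConj (M⁻¹) (St t) := by
    rw [hMinv]
    exact reduce_pos t ht n _ (by simpa using (by linarith : d + a = t)) (by simpa using hn)
  have h2 : IsConj M ((St t)⁻¹) := by
    have := isConj_inv h1
    rwa [inv_inv] at this
  have h3 : (St t)⁻¹ = mk t 1 (-1) 0 (by ring) := by
    show (mk 0 (-1) 1 t (by ring))⁻¹ = _
    rw [mk_inv]
    apply Subtype.ext
    rw [mk_coe, mk_coe]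
    norm_num
  have h4 : IsConj (mk t 1 (-1) 0 (by ring) : SL2) (St' t) := by
    apply isConj_of 1 t 0 1 (by ring)
    rw [mk_coe, St'_coe]
    ext i j
    fin_cases i <;> fin_cases j <;>
      simp [Matrix.mul_apply, Fin.sum_univ_two] <;> ring
  rw [h3] at h2
  exact h2.trans h4


lemma aux_ring {R : Type*} [Ring R] (x : ℤ) (N : R) :
    (1 + x•N) * (1 + N) = 1 + (x+1)•N + x•(N*N) := by
  rw [add_mul, one_mul, mul_add, mul_one, add_smul, one_smul, smul_mul_assoc]
  abel

-- Cayley–Hamilton for 2x2 det-1 matrices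
lemma CH2 (m : Matrix (Fin 2) (Fin 2) ℤ) (hdet : m.det = 1) (t : ℤ) (ht : t = m 0 0 + m 1 1) :
    m * m = t • m - 1 := by
  rw [Matrix.det_fin_two] at hdet
  ext i j
  fin_cases i <;> fin_cases j <;>
    simp [Matrix.mul_apply, Fin.sum_univ_two, Matrix.one_apply, -zsmul_eq_mul]
  · linear_combination -(m 0 0 * ht) - hdet
  · linear_combination -(m 0 1 * ht)
  · linear_combination -(m 1 0 * ht)
  · linear_combination -(m 1 1 * ht) - hdet

lemma pow_ne_one_of_trace_ge (m : Matrix (Fin 2) (Fin 2) ℤ) (hdet : m.det = 1)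
    (ht : 3 ≤ m 0 0 + m 1 1) : ∀ n : ℕ, m ^ (n+1) ≠ 1 := by
  set t := m 0 0 + m 1 1 with htdef
  have hrec : ∀ n : ℕ, m ^ (n+2) = t • m ^ (n+1) - m ^ n := by
    intro n
    have h1 : m ^ (n+2) = m ^ n * (m * m) := by
      rw [← pow_two, ← pow_add]
    rw [h1, CH2 m hdet t htdef, mul_sub, mul_one, Matrix.mul_smul, ← pow_succ]
  set f : ℕ → ℤ := fun n => (m ^ n) 0 0 + (m ^ n) 1 1 with hf
  have hfrec : ∀ n : ℕ, f (n+2) = t * f (n+1) - f n := by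
    intro n
    simp only [hf, hrec n, Matrix.sub_apply, Matrix.smul_apply, smul_eq_mul]
    ring
  have hf0 : f 0 = 2 := by simp [hf, Matrix.one_apply]
  have hf1 : f 1 = t := by simp [hf, htdef]
  have key : ∀ n : ℕ, f n + 1 ≤ f (n+1) ∧ 3 ≤ f (n+1) := by
    intro n
    induction n with
    | zero => rw [hf0, hf1]; omega
    | succ k ih =>
      obtain ⟨ih1, ih2⟩ := ih
      rw [hfrec k]
      constructor <;> nlinarith
  intro n hcon
  have h2 : f (n+1) = 2 := by rw [hf]; simp [hcon, Matrix.one_apply]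
  have := (key n).2
  omega

lemma eq_one_of_trace_two (m : Matrix (Fin 2) (Fin 2) ℤ) (hdet : m.det = 1)
    (ht : m 0 0 + m 1 1 = 2) (n : ℕ) (h : m ^ (n+1) = 1) : m = 1 := by
  set N := m - 1 with hN
  have hN2 : N * N = 0 := by
    have hch := CH2 m hdet 2 ht.symm
    rw [hN]
    have hexp : (m - 1) * (m - 1) = m * m - (2:ℤ) • m + 1 := by
      have : ((2:ℤ) • m : Matrix (Fin 2) (Fin 2) ℤ) = m + m := by
        rw [two_smul]
      rw [this]
      noncomm_ring
    rw [hexp, hch]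
    abel
  have hpow : ∀ j : ℕ, m ^ j = 1 + (j : ℤ) • N := by
    intro j
    induction j with
    | zero => simp
    | succ k ih =>
      have hm : m = 1 + N := by rw [hN]; abel
      rw [pow_succ, ih, hm, aux_ring, hN2, smul_zero, add_zero]
      push_cast
      ring_nf
  have h0 : ((n:ℤ) + 1) • N = 0 := by
    have h5 := hpow (n+1)
    rw [h] at h5
    push_cast at h5
    have := h5.symm
    rwa [add_comm, ← eq_sub_iff_add_eq, sub_self] at this
  have hNzero : N = 0 := by
    ext i j
    have h6 := congrFun (congrFun h0 i) j
    simp [Matrix.smul_apply] at h6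
    rcases h6 with h' | h'
    · omega
    · exact h'
  rw [hN, sub_eq_zero] at hNzero
  exact hNzero

lemma trace_classify (M : SL2) (hM : M ≠ 1) (hfin : IsOfFinOrder M) :
    ((M : Matrix (Fin 2) (Fin 2) ℤ) 0 0 + (M : Matrix (Fin 2) (Fin 2) ℤ) 1 1 = -1 ∨
     (M : Matrix (Fin 2) (Fin 2) ℤ) 0 0 + (M : Matrix (Fin 2) (Fin 2) ℤ) 1 1 = 0 ∨
     (M : Matrix (Fin 2) (Fin 2) ℤ) 0 0 + (M : Matrix (Fin 2) (Fin 2) ℤ) 1 1 = 1) ∨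
    (M : Matrix (Fin 2) (Fin 2) ℤ) = -1 := by
  obtain ⟨n, hn, hpow⟩ := isOfFinOrder_iff_pow_eq_one.1 hfin
  set m := (M : Matrix (Fin 2) (Fin 2) ℤ) with hm
  have hdet : m.det = 1 := M.2
  have hmn : m ^ n = 1 := by
    rw [hm]
    have : ((M ^ n : SL2) : Matrix (Fin 2) (Fin 2) ℤ) = 1 := by rw [hpow]; rfl
    simpa using this
  set t := m 0 0 + m 1 1 with ht
  -- negated matrix facts
  have hdetneg : (-m).det = 1 := by
    rw [Matrix.det_fin_two] at hdet ⊢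
    simp only [Matrix.neg_apply]
    linarith
  have hnegtr : (-m) 0 0 + (-m) 1 1 = -t := by simp [ht]; ring
  have hnegpow : (-m) ^ (2*n) = 1 := by
    have h1 : (-m) ^ (2*n) = (-1 : Matrix (Fin 2) (Fin 2) ℤ)^(2*n) * m^(2*n) := neg_pow _ _
    have h2 : m^(2*n) = (m^n)^2 := by rw [← pow_mul, mul_comm]
    rw [h1, h2, hmn, one_pow, mul_one, Even.neg_one_pow (even_two_mul n)]
  -- rule out t ≥ 3
  have h3 : ¬ (3 ≤ t) := by
    intro hge
    exact pow_ne_one_of_trace_ge m hdet hge (n-1) (by rwa [Nat.sub_add_cancel hn] )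
  -- rule out t ≤ -3
  have h3' : ¬ (t ≤ -3) := by
    intro hle
    refine pow_ne_one_of_trace_ge (-m) hdetneg (by omega) (2*n-1) ?_
    rwa [Nat.sub_add_cancel (by omega)]
  -- t = 2 gives M = 1
  have h2 : t ≠ 2 := by
    intro h2
    apply hM
    apply Subtype.ext
    show m = _
    rw [eq_one_of_trace_two m hdet h2 (n-1) (by rwa [Nat.sub_add_cancel hn])]
    rfl
  -- t = -2 gives m = -1
  by_cases h2' : t = -2
  · right
    have := eq_one_of_trace_two (-m) hdetneg (by omega) (2*n-1)
      (by rwa [Nat.sub_add_cancel (by omega)])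
    exact neg_eq_iff_eq_neg.1 this
  · left
    omega

lemma c_ne_zero (M : SL2)
    (ht : ((M : Matrix (Fin 2) (Fin 2) ℤ) 0 0 + (M : Matrix (Fin 2) (Fin 2) ℤ) 1 1)^2 ≤ 1) :
    (M : Matrix (Fin 2) (Fin 2) ℤ) 1 0 ≠ 0 := by
  intro h0
  have hdet := det_entries M
  rw [h0] at hdet
  rcases Int.eq_one_or_neg_one_of_mul_eq_one' (by linarith : (M : Matrix (Fin 2) (Fin 2) ℤ) 0 0 * (M : Matrix (Fin 2) (Fin 2) ℤ) 1 1 = 1) with ⟨h1, h2⟩ | ⟨h1, h2⟩ <;>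
    rw [h1, h2] at ht <;> norm_num at ht

lemma conj_invariants (M N : SL2) (h : IsConj M N) :
    ((M : Matrix (Fin 2) (Fin 2) ℤ) 0 0 + (M : Matrix (Fin 2) (Fin 2) ℤ) 1 1 =
     (N : Matrix (Fin 2) (Fin 2) ℤ) 0 0 + (N : Matrix (Fin 2) (Fin 2) ℤ) 1 1) ∧
    (((M : Matrix (Fin 2) (Fin 2) ℤ) 0 0 + (M : Matrix (Fin 2) (Fin 2) ℤ) 1 1)^2 ≤ 1 →
      (0 < (M : Matrix (Fin 2) (Fin 2) ℤ) 1 0 ↔ 0 < (N : Matrix (Fin 2) (Fin 2) ℤ) 1 0)) := by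
  obtain ⟨g, hg⟩ := isConj_iff.1 h
  have hg' : g * M = N * g := by rw [← hg]; group
  have hmat : (g : Matrix (Fin 2) (Fin 2) ℤ) * (M : Matrix (Fin 2) (Fin 2) ℤ)
      = (N : Matrix (Fin 2) (Fin 2) ℤ) * (g : Matrix (Fin 2) (Fin 2) ℤ) := by
    have := congrArg (Subtype.val) hg'
    exact this
  have E : ∀ i j : Fin 2, (g : Matrix (Fin 2) (Fin 2) ℤ) i 0 * (M : Matrix (Fin 2) (Fin 2) ℤ) 0 j
      + (g : Matrix (Fin 2) (Fin 2) ℤ) i 1 * (M : Matrix (Fin 2) (Fin 2) ℤ) 1 j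
      = (N : Matrix (Fin 2) (Fin 2) ℤ) i 0 * (g : Matrix (Fin 2) (Fin 2) ℤ) 0 j
      + (N : Matrix (Fin 2) (Fin 2) ℤ) i 1 * (g : Matrix (Fin 2) (Fin 2) ℤ) 1 j := by
    intro i j
    have := congrFun (congrFun hmat i) j
    simpa [Matrix.mul_apply, Fin.sum_univ_two] using this
  have E00 := E 0 0
  have E01 := E 0 1
  have E10 := E 1 0
  have E11 := E 1 1
  clear E hmat hg hg'
  set p := (g : Matrix (Fin 2) (Fin 2) ℤ) 0 0
  set q := (g : Matrix (Fin 2) (Fin 2) ℤ) 0 1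
  set r := (g : Matrix (Fin 2) (Fin 2) ℤ) 1 0
  set s := (g : Matrix (Fin 2) (Fin 2) ℤ) 1 1
  set a := (M : Matrix (Fin 2) (Fin 2) ℤ) 0 0
  set b := (M : Matrix (Fin 2) (Fin 2) ℤ) 0 1
  set c := (M : Matrix (Fin 2) (Fin 2) ℤ) 1 0
  set d := (M : Matrix (Fin 2) (Fin 2) ℤ) 1 1
  set a2 := (N : Matrix (Fin 2) (Fin 2) ℤ) 0 0
  set b2 := (N : Matrix (Fin 2) (Fin 2) ℤ) 0 1
  set c2 := (N : Matrix (Fin 2) (Fin 2) ℤ) 1 0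
  set d2 := (N : Matrix (Fin 2) (Fin 2) ℤ) 1 1
  have hdg : p * s - q * r = 1 := det_entries g
  have hdM : a * d - b * c = 1 := det_entries M
  have htr : a + d = a2 + d2 := by
    first
    | linear_combination s*E00 - r*E01 + p*E11 - q*E10 + (a + d - a2 - d2)*hdg
    | linear_combination -(s*E00) + r*E01 - p*E11 + q*E10 - (a + d - a2 - d2)*hdg
    | linear_combination s*E00 - r*E01 + p*E11 - q*E10 - (a + d - a2 - d2)*hdg
    | linear_combination s*E00 - r*E01 + p*E11 - q*E10 + (a2 + d2 - a - d)*hdg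
  have hc2 : c2 = c*s^2 - b*r^2 + (a-d)*r*s := by
    first
    | linear_combination s*E10 - r*E11 + c2*hdg
    | linear_combination -(s*E10) + r*E11 - c2*hdg
    | linear_combination -(s*E10) + r*E11 + c2*hdg
    | linear_combination s*E10 - r*E11 - c2*hdg
  have hkey : 4*c*c2 = (2*c*s + (a-d)*r)^2 + (4 - (a+d)^2)*r^2 := by
    first
    | linear_combination 4*c*hc2 + 4*r^2*hdM
    | linear_combination 4*c*hc2 - 4*r^2*hdM
  refine ⟨htr, fun hle => ?_⟩
  have hcne : c ≠ 0 := c_ne_zero M hle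
  have hpos : 0 < 4*c*c2 := by
    rcases eq_or_ne r 0 with hr | hr
    · have hs : s ≠ 0 := by
        intro hs
        rw [hr, hs] at hdg
        simp at hdg
      have h1 : c*s ≠ 0 := mul_ne_zero hcne hs
      have h2 : 0 < (c*s)^2 := by positivity
      rw [hkey, hr]
      nlinarith [sq_nonneg (a+d)]
    · rw [hkey]
      have h1 : 0 < r^2 := by positivity
      nlinarith [sq_nonneg (2*c*s + (a-d)*r)]
  constructor
  · intro hc
    nlinarith
  · intro hc2'
    nlinarith

lemma hABc : ((A * B : SL2) : Matrix (Fin 2) (Fin 2) ℤ) = !![0,1;-1,1] := by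
  show (A : Matrix (Fin 2) (Fin 2) ℤ) * (B : Matrix (Fin 2) (Fin 2) ℤ) = _
  norm_num [A, B, Matrix.mul_fin_two]
lemma hAB2 : (((A * B)^2 : SL2) : Matrix (Fin 2) (Fin 2) ℤ) = !![-1,1;-1,0] := by
  show ((A * B : SL2) : Matrix (Fin 2) (Fin 2) ℤ)^2 = _
  rw [hABc]
  norm_num [pow_succ, Matrix.mul_fin_two, Matrix.one_fin_two]
lemma hAB3 : (((A * B)^3 : SL2) : Matrix (Fin 2) (Fin 2) ℤ) = !![-1,0;0,-1] := by
  show ((A * B : SL2) : Matrix (Fin 2) (Fin 2) ℤ)^3 = _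
  rw [hABc]
  norm_num [pow_succ, Matrix.mul_fin_two, Matrix.one_fin_two]
lemma hAB4 : (((A * B)^4 : SL2) : Matrix (Fin 2) (Fin 2) ℤ) = !![0,-1;1,-1] := by
  show ((A * B : SL2) : Matrix (Fin 2) (Fin 2) ℤ)^4 = _
  rw [hABc]
  norm_num [pow_succ, Matrix.mul_fin_two, Matrix.one_fin_two]
lemma hAB5 : (((A * B)^5 : SL2) : Matrix (Fin 2) (Fin 2) ℤ) = !![1,-1;1,0] := by
  show ((A * B : SL2) : Matrix (Fin 2) (Fin 2) ℤ)^5 = _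
  rw [hABc]
  norm_num [pow_succ, Matrix.mul_fin_two, Matrix.one_fin_two]
lemma hA2B : ((A^2 * B : SL2) : Matrix (Fin 2) (Fin 2) ℤ) = !![-1,2;-1,1] := by
  show (A : Matrix (Fin 2) (Fin 2) ℤ)^2 * (B : Matrix (Fin 2) (Fin 2) ℤ) = _
  norm_num [A, B, pow_succ, Matrix.mul_fin_two, Matrix.one_fin_two]
lemma hA2B3 : (((A^2 * B)^3 : SL2) : Matrix (Fin 2) (Fin 2) ℤ) = !![1,-2;1,-1] := by
  show ((A^2 * B : SL2) : Matrix (Fin 2) (Fin 2) ℤ)^3 = _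
  rw [hA2B]
  norm_num [pow_succ, Matrix.mul_fin_two, Matrix.one_fin_two]

-- bridge conjugations from canonical forms to the seven elements
lemma bridge_pos1 : IsConj (St 1) ((A*B)^5 : SL2) := by
  apply isConj_of 1 1 0 1 (by ring)
  rw [St_coe, hAB5]
  norm_num [Matrix.mul_fin_two]

lemma bridge_posneg1 : St (-1) = ((A*B)^4 : SL2) := by
  apply Subtype.ext
  rw [St_coe, hAB4]

lemma bridge_pos0 : IsConj (St 0) (((A^2)*B)^3 : SL2) := by
  apply isConj_of 1 1 0 1 (by ring)
  rw [St_coe, hA2B3]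
  norm_num [Matrix.mul_fin_two]

lemma bridge_neg1 : St' 1 = (A*B : SL2) := by
  apply Subtype.ext
  rw [St'_coe, hABc]

lemma bridge_negneg1 : IsConj (St' (-1)) ((A*B)^2 : SL2) := by
  apply isConj_of 1 1 0 1 (by ring)
  rw [St'_coe, hAB2]
  norm_num [Matrix.mul_fin_two]

lemma bridge_neg0 : IsConj (St' 0) ((A^2)*B : SL2) := by
  apply isConj_of 1 1 0 1 (by ring)
  rw [St'_coe, hA2B]
  norm_num [Matrix.mul_fin_two]

lemma neg_one_eta : (-1 : Matrix (Fin 2) (Fin 2) ℤ) = !![-1,0;0,-1] := by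
  ext i j
  fin_cases i <;> fin_cases j <;> simp [Matrix.one_apply]

def S7 : Set SL2 := {A * B, (A * B) ^ 2, (A * B) ^ 3, (A * B) ^ 4, (A * B) ^ 5,
    A ^ 2 * B, (A ^ 2 * B) ^ 3}

lemma mem1 : (A*B : SL2) ∈ S7 := Or.inl rfl
lemma mem2 : ((A*B)^2 : SL2) ∈ S7 := Or.inr (Or.inl rfl)
lemma mem3 : ((A*B)^3 : SL2) ∈ S7 := Or.inr (Or.inr (Or.inl rfl))
lemma mem4 : ((A*B)^4 : SL2) ∈ S7 := Or.inr (Or.inr (Or.inr (Or.inl rfl)))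
lemma mem5 : ((A*B)^5 : SL2) ∈ S7 := Or.inr (Or.inr (Or.inr (Or.inr (Or.inl rfl))))
lemma mem6 : (A^2*B : SL2) ∈ S7 := Or.inr (Or.inr (Or.inr (Or.inr (Or.inr (Or.inl rfl)))))
lemma mem7 : ((A^2*B)^3 : SL2) ∈ S7 := Or.inr (Or.inr (Or.inr (Or.inr (Or.inr (Or.inr rfl)))))

lemma seven_uniq (z x : SL2) (hz : z ∈ S7) (hx : x ∈ S7)
    (htreq : (z : Matrix (Fin 2) (Fin 2) ℤ) 0 0 + (z : Matrix (Fin 2) (Fin 2) ℤ) 1 1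
      = (x : Matrix (Fin 2) (Fin 2) ℤ) 0 0 + (x : Matrix (Fin 2) (Fin 2) ℤ) 1 1)
    (hsign : (0 < (z : Matrix (Fin 2) (Fin 2) ℤ) 1 0 ↔ 0 < (x : Matrix (Fin 2) (Fin 2) ℤ) 1 0)) :
    z = x := by
  simp only [S7, Set.mem_insert_iff, Set.mem_singleton_iff] at hz hx
  rcases hz with rfl|rfl|rfl|rfl|rfl|rfl|rfl <;>
    rcases hx with rfl|rfl|rfl|rfl|rfl|rfl|rfl <;>
    first
      | (exfalso;
         simp only [hABc, hAB2, hAB3, hAB4, hAB5, hA2B, hA2B3] at htreq hsign;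
         (revert htreq hsign; norm_num) <;> omega)
      | rfl

end SL2Aux

/-- Every nontrivial finite-order element of `SL(2,ℤ)` is conjugate to exactly one of the
seven elements `A·B`, `(A·B)²`, `(A·B)³`, `(A·B)⁴`, `(A·B)⁵`, `A²·B`, `(A²·B)³`. -/
theorem finite_order_conj_classes_SL2Z
    (M : Matrix.SpecialLinearGroup (Fin 2) ℤ) (hM : M ≠ 1) (hfin : IsOfFinOrder M) :
    ∃! x, x ∈ ({A * B, (A * B) ^ 2, (A * B) ^ 3, (A * B) ^ 4, (A * B) ^ 5,
        A ^ 2 * B, (A ^ 2 * B) ^ 3} : Set (Matrix.SpecialLinearGroup (Fin 2) ℤ)) ∧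
      IsConj M x := by
  have hS7 : ({A * B, (A * B) ^ 2, (A * B) ^ 3, (A * B) ^ 4, (A * B) ^ 5,
      A ^ 2 * B, (A ^ 2 * B) ^ 3} : Set (Matrix.SpecialLinearGroup (Fin 2) ℤ)) = S7 := rfl
  rw [hS7]
  rcases trace_classify M hM hfin with htr | hneg
  case inr =>
    -- M = -1 = (A*B)^3
    have hMeq : M = (A*B)^3 := by
      apply Subtype.ext
      rw [hAB3, ← neg_one_eta]
      exact hneg
    refine ⟨(A*B)^3, ⟨mem3, hMeq ▸ IsConj.refl _⟩, ?_⟩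
    rintro y ⟨hymem, hyconj⟩
    have hMtr : (M : Matrix (Fin 2) (Fin 2) ℤ) 0 0 + (M : Matrix (Fin 2) (Fin 2) ℤ) 1 1 = -2 := by
      rw [hneg, neg_one_eta]; norm_num
    have hytr : (y : Matrix (Fin 2) (Fin 2) ℤ) 0 0 + (y : Matrix (Fin 2) (Fin 2) ℤ) 1 1 = -2 := by
      rw [← (conj_invariants M y hyconj).1]; exact hMtr
    simp only [S7, Set.mem_insert_iff, Set.mem_singleton_iff] at hymem
    rcases hymem with rfl|rfl|rfl|rfl|rfl|rfl|rfl <;>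
      first
        | (exfalso;
           simp only [hABc, hAB2, hAB3, hAB4, hAB5, hA2B, hA2B3] at hytr;
           (norm_num at hytr) <;> omega)
        | rfl
  case inl =>
    have ht2 : ((M : Matrix (Fin 2) (Fin 2) ℤ) 0 0 + (M : Matrix (Fin 2) (Fin 2) ℤ) 1 1)^2 ≤ 1 := by
      rcases htr with h|h|h <;> rw [h] <;> norm_num
    have hcne : (M : Matrix (Fin 2) (Fin 2) ℤ) 1 0 ≠ 0 := c_ne_zero M ht2
    have hx : ∃ x : SL2, x ∈ S7 ∧ IsConj M x := by
      rcases hcne.lt_or_gt with hc | hc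
      · -- c < 0 : conjugate to St' t
        rcases htr with h|h|h
        · have hconj := reduce_neg (-1) (by norm_num) M h hc
          exact ⟨(A*B)^2, mem2, hconj.trans bridge_negneg1⟩
        · have hconj := reduce_neg 0 (by norm_num) M h hc
          exact ⟨A^2*B, mem6, hconj.trans bridge_neg0⟩
        · have hconj := reduce_neg 1 (by norm_num) M h hc
          refine ⟨A*B, mem1, ?_⟩
          rw [← bridge_neg1]
          exact hconj
      · -- 0 < c : conjugate to St t
        obtain ⟨n, hn⟩ : ∃ n : ℕ, (M : Matrix (Fin 2) (Fin 2) ℤ) 1 0 = (n : ℤ) + 1 :=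
          ⟨((M : Matrix (Fin 2) (Fin 2) ℤ) 1 0).toNat - 1, by omega⟩
        rcases htr with h|h|h
        · have hconj := reduce_pos (-1) (by norm_num) n M h hn
          refine ⟨(A*B)^4, mem4, ?_⟩
          rw [← bridge_posneg1]
          exact hconj
        · have hconj := reduce_pos 0 (by norm_num) n M h hn
          exact ⟨(A^2*B)^3, mem7, hconj.trans bridge_pos0⟩
        · have hconj := reduce_pos 1 (by norm_num) n M h hn
          exact ⟨(A*B)^5, mem5, hconj.trans bridge_pos1⟩
    obtain ⟨x, hxmem, hxconj⟩ := hx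
    refine ⟨x, ⟨hxmem, hxconj⟩, ?_⟩
    rintro y ⟨hymem, hyconj⟩
    obtain ⟨hytr0, hysign⟩ := conj_invariants M y hyconj
    obtain ⟨hxtr0, hxsign⟩ := conj_invariants M x hxconj
    exact seven_uniq y x hymem hxmem (hytr0.symm.trans hxtr0)
      ((hysign ht2).symm.trans (hxsign ht2))
end
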